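/- Let A be a (not necessarily associative) algebra over a field K with two bilinear products ⋆ and ∘ satisfying, for all u,v,w ∈ A: (1) (u⋆v)⋆w − u⋆(v⋆w) = −((v∘u)⋆w + v⋆(u⋆w)); (2) (u⋆v)∘w − u⋆(v∘w) = −((v∘u)∘w − v∘(u∘w)); (3) u∘(v∘w) = −u∘(v⋆w) (a pre-left Leibniz algebra). Then the product u•v := u⋆v + v∘u makes A a left Leibniz algebra, i.e., u•(v•w) = (u•v)•w + v•(u•w) for all u,v,w. -/
import Mathlib


/-- A pre-left Leibniz algebra gives a left Leibniz algebra via u•v = u⋆v + v∘u. -/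
theorem preLeibniz_gives_leftLeibniz
    {K A : Type*} [Field K] [AddCommGroup A] [Module K A]
    (starP circP : A →ₗ[K] A →ₗ[K] A)
    (h1 : ∀ u v w : A,
      starP (starP u v) w - starP u (starP v w)
        = -(starP (circP v u) w + starP v (starP u w)))
    (h2 : ∀ u v w : A,
      circP (starP u v) w - starP u (circP v w)
        = -(circP (circP v u) w - circP v (circP u w)))
    (h3 : ∀ u v w : A, circP u (circP v w) = -(circP u (starP v w))) :
    ∀ u v w : A,
      starP u (starP v w + circP w v) + circP (starP v w + circP w v) u
        = (starP (starP u v + circP v u) w + circP w (starP u v + circP v u))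
          + (starP v (starP u w + circP w u) + circP (starP u w + circP w u) v) := by
  intro u v w
  simp only [map_add, LinearMap.add_apply]
  linear_combination (norm := abel) -(h1 u v w) - (h2 u w v) - (h3 w u v) + (h2 v w u)
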